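/- Let (B̃, Λ) be a compatible pair (B̃ᵀΛ = [D' 0]) and k ∈ [n] a mutable index with b-matrix entries b_{i,k}. Then for every j ∈ [m] with j ≠ k, the two exponent vectors a⁺ = −e_k + Σᵢ max(0, b_{i,k}) e_i and a⁻ = −e_k + Σᵢ max(0, −b_{i,k}) e_i satisfy β(a⁺, e_j) = β(a⁻, e_j), where β is the bilinear form given by Λ; i.e. both exchange monomials q-commute identically with every X_j. -/

import Mathlib

/-- For a compatible pair `(B̃, Λ)` and a mutable index `k`, the two exponent
vectors `a⁺ = -e_k + ∑ max(0, b_{i,k}) e_i` and `a⁻ = -e_k + ∑ max(0, -b_{i,k}) e_i`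
of the exchange monomials satisfy `β(a⁺, e_j) = β(a⁻, e_j)` for every `j ≠ k`,
where `β(a, b) = aᵀ Λ b`: both exchange monomials `q`-commute identically with
every `X_j`. -/
theorem exchange_monomials_q_commute (m n : ℕ) (hmn : n ≤ m)
    (Bt : Matrix (Fin m) (Fin n) ℤ) (Λ : Matrix (Fin m) (Fin m) ℤ)
    (hΛ : Λ.transpose = -Λ)
    (d : Fin n → ℤ) (hd : ∀ i, 0 < d i)
    (hcomp : ∀ (i : Fin n) (j : Fin m),
      (Bt.transpose * Λ) i j = if (j : ℕ) = (i : ℕ) then d i else 0)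
    (k : Fin n)
    (aplus aminus : Fin m → ℤ)
    (haplus : ∀ i : Fin m,
      aplus i = (if (i : ℕ) = (k : ℕ) then -1 else 0) + max 0 (Bt i k))
    (haminus : ∀ i : Fin m,
      aminus i = (if (i : ℕ) = (k : ℕ) then -1 else 0) + max 0 (-Bt i k)) :
    ∀ j : Fin m, (j : ℕ) ≠ (k : ℕ) →
      dotProduct aplus (Λ.mulVec (Pi.single j 1)) =
        dotProduct aminus (Λ.mulVec (Pi.single j 1)) := by
  intro j hj
  have h := hcomp k j
  rw [Matrix.mul_apply, if_neg hj] at h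
  simp only [Matrix.transpose_apply] at h
  have key : ∀ i, aplus i - aminus i = Bt i k := by
    intro i
    rw [haplus, haminus]
    rcases le_total (Bt i k) 0 with h' | h'
    · rw [max_eq_left h', max_eq_right (by omega)]; ring
    · rw [max_eq_right h', max_eq_left (by omega)]; ring
  rw [← sub_eq_zero]
  have : dotProduct aplus (Λ.mulVec (Pi.single j 1)) -
      dotProduct aminus (Λ.mulVec (Pi.single j 1)) =
      ∑ i, Bt i k * Λ i j := by
    simp only [dotProduct, ← Finset.sum_sub_distrib, ← sub_mul, key,
      Matrix.mulVec_single_one, Matrix.col_apply, mul_one]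
  rw [this, h]
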